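/- Let X be a complete metric space, let G be a finite group acting on X by isometries, and suppose X admits a conical, G-equivariant geodesic bicombing σ. Then the action of G on X has a fixed point: there exists x ∈ X with g·x = x for all g ∈ G. -/

import Mathlib

open Metric Set

variable {X : Type*} [MetricSpace X]

/-- A geodesic bicombing on a metric space: a continuous choice of constant-speed
geodesics, parametrized on `[0,1]`. -/
def IsGeodesicBicombing (σ : X → X → ℝ → X) : Prop :=
  ContinuousOn (fun p : X × X × ℝ => σ p.1 p.2.1 p.2.2)
    {p : X × X × ℝ | p.2.2 ∈ Set.Icc (0 : ℝ) 1} ∧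
  (∀ x y : X, σ x y 0 = x) ∧
  (∀ x y : X, σ x y 1 = y) ∧
  (∀ x y : X, ∀ s ∈ Set.Icc (0 : ℝ) 1, ∀ t ∈ Set.Icc (0 : ℝ) 1,
    dist (σ x y s) (σ x y t) = |s - t| * dist x y)

/-- A bicombing is conical. -/
def IsConical (σ : X → X → ℝ → X) : Prop :=
  ∀ x y x' y' : X, ∀ t ∈ Set.Icc (0 : ℝ) 1,
    dist (σ x y t) (σ x' y' t) ≤ (1 - t) * dist x x' + t * dist y y'

/-- A bicombing is consistent. -/
def IsConsistent (σ : X → X → ℝ → X) : Prop :=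
  ∀ x y : X, ∀ s t l : ℝ, 0 ≤ s → s ≤ t → t ≤ 1 → l ∈ Set.Icc (0 : ℝ) 1 →
    σ (σ x y s) (σ x y t) l = σ x y ((1 - l) * s + l * t)

/-- A ccc bicombing: a geodesic bicombing that is consistent and conical. -/
def IsCCC (σ : X → X → ℝ → X) : Prop :=
  IsGeodesicBicombing σ ∧ IsConsistent σ ∧ IsConical σ

/-- A `σ`-ray: a unit-speed geodesic ray compatible with the bicombing `σ`
(encoded as a map on `ℝ` which is constant on `(-∞,0]`). -/
def IsRay (σ : X → X → ℝ → X) (ξ : ℝ → X) : Prop :=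
  (∀ t : ℝ, t ≤ 0 → ξ t = ξ 0) ∧
  (∀ s t : ℝ, 0 ≤ s → 0 ≤ t → dist (ξ s) (ξ t) = |s - t|) ∧
  (∀ t : ℝ, 0 ≤ t → ∀ s ∈ Set.Icc (0 : ℝ) 1, σ (ξ 0) (ξ t) s = ξ (s * t))

/-- Two rays are asymptotic: their distance at time `t` is uniformly bounded for `t ≥ 0`. -/
def Asymptotic (ξ ζ : ℝ → X) : Prop :=
  ∃ M : ℝ, ∀ t : ℝ, 0 ≤ t → dist (ξ t) (ζ t) ≤ M

namespace FGFP

open Filter Function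

/-- Bundle of the bicombing axioms we use (no continuity needed). -/
structure Nice (σ : X → X → ℝ → X) : Prop where
  h0 : ∀ x y : X, σ x y 0 = x
  h1 : ∀ x y : X, σ x y 1 = y
  hg : ∀ x y : X, ∀ s ∈ Set.Icc (0:ℝ) 1, ∀ t ∈ Set.Icc (0:ℝ) 1,
      dist (σ x y s) (σ x y t) = |s - t| * dist x y
  hc : ∀ x y x' y' : X, ∀ t ∈ Set.Icc (0:ℝ) 1,
      dist (σ x y t) (σ x' y' t) ≤ (1 - t) * dist x x' + t * dist y y'

lemma half_mem : (2⁻¹ : ℝ) ∈ Set.Icc (0:ℝ) 1 := by norm_num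

variable {σ : X → X → ℝ → X}

lemma Nice.self (H : Nice σ) (z : X) {t : ℝ} (ht : t ∈ Set.Icc (0:ℝ) 1) :
    σ z z t = z := by
  have h := H.hg z z t ht 0 ⟨le_refl 0, zero_le_one⟩
  rw [H.h0] at h
  simp only [dist_self, mul_zero] at h
  exact dist_eq_zero.mp h

lemma Nice.half_lip (H : Nice σ) (a b a' b' : X) :
    dist (σ a b 2⁻¹) (σ a' b' 2⁻¹) ≤ 2⁻¹ * dist a a' + 2⁻¹ * dist b b' := by
  have h := H.hc a b a' b' 2⁻¹ half_mem
  norm_num at h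
  linarith [h]

/-- **Key lemma** (reversal defect of a conical geodesic bicombing):
`dist (σ x y ½) (σ y x ½) ≤ ½ · dist x y`. -/
lemma Nice.rho (H : Nice σ) (x y : X) :
    dist (σ x y 2⁻¹) (σ y x 2⁻¹) ≤ dist x y / 2 := by
  set m2 := σ y x 2⁻¹ with hm2
  have one_mem : (1:ℝ) ∈ Set.Icc (0:ℝ) 1 := ⟨zero_le_one, le_refl 1⟩
  have zero_mem : (0:ℝ) ∈ Set.Icc (0:ℝ) 1 := ⟨le_refl 0, zero_le_one⟩
  have hxm2 : dist x m2 = dist x y / 2 := by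
    have h := H.hg y x 1 one_mem 2⁻¹ half_mem
    rw [H.h1] at h
    rw [h, dist_comm y x]
    rw [abs_of_nonneg (by norm_num : (0:ℝ) ≤ 1 - 2⁻¹)]; ring
  have hm2y : dist m2 y = dist x y / 2 := by
    have h := H.hg y x 2⁻¹ half_mem 0 zero_mem
    rw [H.h0, ← hm2] at h
    rw [h, dist_comm y x]
    rw [abs_of_nonneg (by norm_num : (0:ℝ) ≤ 2⁻¹ - 0)]; ring
  have hmid : dist (σ x m2 2⁻¹) m2 = dist x m2 / 2 := by
    have h := H.hg x m2 2⁻¹ half_mem 1 one_mem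
    rw [H.h1] at h
    rw [h, abs_of_nonpos (by norm_num : (2⁻¹:ℝ) - 1 ≤ 0)]; ring
  have hcmp : dist (σ x m2 2⁻¹) (σ x y 2⁻¹) ≤ 2⁻¹ * dist m2 y := by
    have h := H.half_lip x m2 x y
    simpa [dist_self] using h
  have htri := dist_triangle (σ x y 2⁻¹) (σ x m2 2⁻¹) m2
  have : dist (σ x y 2⁻¹) m2 ≤ dist x y / 2 := by
    rw [dist_comm (σ x y 2⁻¹) (σ x m2 2⁻¹)] at htri
    calc dist (σ x y 2⁻¹) m2 ≤ _ + _ := htri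
      _ ≤ 2⁻¹ * dist m2 y + dist x m2 / 2 := add_le_add hcmp (le_of_eq hmid)
      _ = dist x y / 2 := by rw [hm2y, hxm2]; ring
  exact this

section Mid

open Topology

set_option linter.unusedSectionVars false

variable [CompleteSpace X] [Nonempty X]

/-- One step of the symmetrizing midpoint iteration. -/
noncomputable def pIter (σ : X → X → ℝ → X) : X × X → X × X :=
  fun p => (σ p.1 p.2 2⁻¹, σ p.2 p.1 2⁻¹)

lemma pIter_dist (H : Nice σ) (p : X × X) :
    ∀ t : ℕ, dist ((pIter σ)^[t] p).1 ((pIter σ)^[t] p).2 ≤ (2⁻¹)^t * dist p.1 p.2 := by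
  intro t
  induction t with
  | zero => simp
  | succ t ih =>
    rw [Function.iterate_succ_apply']
    set q := (pIter σ)^[t] p
    calc dist ((pIter σ) q).1 ((pIter σ) q).2 ≤ dist q.1 q.2 / 2 := H.rho q.1 q.2
      _ ≤ ((2⁻¹)^t * dist p.1 p.2) / 2 := by linarith
      _ = (2⁻¹)^(t+1) * dist p.1 p.2 := by ring

lemma pIter_move (H : Nice σ) (p : X × X) (t : ℕ) :
    dist ((pIter σ)^[t] p).1 ((pIter σ)^[t+1] p).1 ≤ (2⁻¹)^t * dist p.1 p.2 ∧
    dist ((pIter σ)^[t] p).2 ((pIter σ)^[t+1] p).2 ≤ (2⁻¹)^t * dist p.1 p.2 := by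
  rw [Function.iterate_succ_apply']
  have hd := pIter_dist H p t
  set q := (pIter σ)^[t] p
  have h1 : dist q.1 ((pIter σ) q).1 = dist q.1 q.2 / 2 := by
    have h := H.hg q.1 q.2 0 ⟨le_refl 0, zero_le_one⟩ 2⁻¹ half_mem
    rw [H.h0] at h
    show dist q.1 (σ q.1 q.2 2⁻¹) = _
    rw [h, abs_of_nonpos (by norm_num : (0:ℝ) - 2⁻¹ ≤ 0)]; ring
  have h2 : dist q.2 ((pIter σ) q).2 = dist q.1 q.2 / 2 := by
    have h := H.hg q.2 q.1 0 ⟨le_refl 0, zero_le_one⟩ 2⁻¹ half_mem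
    rw [H.h0] at h
    show dist q.2 (σ q.2 q.1 2⁻¹) = _
    rw [h, abs_of_nonpos (by norm_num : (0:ℝ) - 2⁻¹ ≤ 0), dist_comm q.2 q.1]; ring
  have h0 : (0:ℝ) ≤ dist q.1 q.2 := dist_nonneg
  constructor
  · rw [h1]; linarith
  · rw [h2]; linarith

lemma pIter_cauchy (H : Nice σ) (p : X × X) :
    CauchySeq (fun t => ((pIter σ)^[t] p).1) :=
  cauchySeq_of_le_geometric 2⁻¹ (dist p.1 p.2) (by norm_num)
    (fun t => by rw [mul_comm]; exact (pIter_move H p t).1)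

/-- The symmetric midpoint. -/
noncomputable def mid (σ : X → X → ℝ → X) (x y : X) : X :=
  limUnder atTop (fun t => ((pIter σ)^[t] (x, y)).1)

lemma mid_tendsto₁ (H : Nice σ) (x y : X) :
    Tendsto (fun t => ((pIter σ)^[t] (x, y)).1) atTop (𝓝 (mid σ x y)) :=
  ((pIter_cauchy H (x, y)).tendsto_limUnder)

lemma mid_tendsto₂ (H : Nice σ) (x y : X) :
    Tendsto (fun t => ((pIter σ)^[t] (x, y)).2) atTop (𝓝 (mid σ x y)) := by
  have h1 := mid_tendsto₁ H x y
  rw [tendsto_iff_dist_tendsto_zero] at h1 ⊢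
  apply squeeze_zero (fun t => dist_nonneg)
    (g := fun t => (2⁻¹)^t * dist x y + dist (((pIter σ)^[t] (x, y)).1) (mid σ x y))
  · intro t
    calc dist (((pIter σ)^[t] (x, y)).2) (mid σ x y)
        ≤ dist (((pIter σ)^[t] (x, y)).2) (((pIter σ)^[t] (x, y)).1)
          + dist (((pIter σ)^[t] (x, y)).1) (mid σ x y) := dist_triangle _ _ _
      _ ≤ (2⁻¹)^t * dist x y + dist (((pIter σ)^[t] (x, y)).1) (mid σ x y) := by
          have := pIter_dist H (x, y) t
          rw [dist_comm]
          exact add_le_add this (le_refl _)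
  · have hgeo : Tendsto (fun t : ℕ => (2⁻¹:ℝ)^t * dist x y) atTop (𝓝 0) := by
      have := (tendsto_pow_atTop_nhds_zero_of_lt_one (by norm_num : (0:ℝ) ≤ 2⁻¹)
        (by norm_num : (2⁻¹:ℝ) < 1)).mul_const (dist x y)
      simpa using this
    simpa using hgeo.add h1

lemma pIter_swap (σ : X → X → ℝ → X) (p : X × X) (t : ℕ) :
    (pIter σ)^[t] (p.2, p.1) = (((pIter σ)^[t] p).2, ((pIter σ)^[t] p).1) := by
  induction t with
  | zero => rfl
  | succ t ih =>
    rw [Function.iterate_succ_apply', Function.iterate_succ_apply', ih]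
    rfl

lemma mid_comm (H : Nice σ) (x y : X) : mid σ x y = mid σ y x := by
  have h2 := mid_tendsto₂ H x y
  have h1 : Tendsto (fun t => ((pIter σ)^[t] (y, x)).1) atTop (𝓝 (mid σ x y)) := by
    have heq : (fun t => ((pIter σ)^[t] (y, x)).1) = (fun t => ((pIter σ)^[t] (x, y)).2) := by
      funext t
      rw [pIter_swap σ (x, y) t]
    rw [heq]
    exact h2
  exact (tendsto_nhds_unique (mid_tendsto₁ H y x) h1).symm

lemma mid_self (H : Nice σ) (z : X) : mid σ z z = z := by
  have : ∀ t, ((pIter σ)^[t] (z, z)).1 = z := by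
    intro t
    have h : ∀ t : ℕ, (pIter σ)^[t] (z, z) = (z, z) := by
      intro t
      induction t with
      | zero => rfl
      | succ t ih =>
        rw [Function.iterate_succ_apply', ih]
        show (σ z z 2⁻¹, σ z z 2⁻¹) = (z, z)
        rw [H.self z half_mem]
    rw [h t]
  exact tendsto_nhds_unique (by simpa only [this] using mid_tendsto₁ H z z) tendsto_const_nhds

lemma pIter_lip (H : Nice σ) (p q : X × X) (t : ℕ) :
    dist ((pIter σ)^[t] p).1 ((pIter σ)^[t] q).1
      + dist ((pIter σ)^[t] p).2 ((pIter σ)^[t] q).2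
    ≤ dist p.1 q.1 + dist p.2 q.2 := by
  induction t with
  | zero => simp
  | succ t ih =>
    rw [Function.iterate_succ_apply', Function.iterate_succ_apply']
    set a := (pIter σ)^[t] p
    set b := (pIter σ)^[t] q
    have l1 : dist ((pIter σ) a).1 ((pIter σ) b).1 ≤ 2⁻¹ * dist a.1 b.1 + 2⁻¹ * dist a.2 b.2 :=
      H.half_lip a.1 a.2 b.1 b.2
    have l2 : dist ((pIter σ) a).2 ((pIter σ) b).2 ≤ 2⁻¹ * dist a.2 b.2 + 2⁻¹ * dist a.1 b.1 :=
      H.half_lip a.2 a.1 b.2 b.1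
    linarith

lemma mid_lip (H : Nice σ) (x y x' y' : X) :
    2 * dist (mid σ x y) (mid σ x' y') ≤ dist x x' + dist y y' := by
  have key : ∀ t : ℕ, dist (((pIter σ)^[t+1] (x, y)).1) (((pIter σ)^[t+1] (x', y')).1)
      ≤ (dist x x' + dist y y') / 2 := by
    intro t
    rw [Function.iterate_succ_apply', Function.iterate_succ_apply']
    set a := (pIter σ)^[t] (x, y)
    set b := (pIter σ)^[t] (x', y')
    have l1 : dist ((pIter σ) a).1 ((pIter σ) b).1 ≤ 2⁻¹ * dist a.1 b.1 + 2⁻¹ * dist a.2 b.2 :=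
      H.half_lip a.1 a.2 b.1 b.2
    have := pIter_lip H (x, y) (x', y') t
    simp only [] at this
    linarith
  have hL : Tendsto (fun t => dist (((pIter σ)^[t+1] (x, y)).1) (((pIter σ)^[t+1] (x', y')).1))
      atTop (𝓝 (dist (mid σ x y) (mid σ x' y'))) := by
    exact ((mid_tendsto₁ H x y).comp (tendsto_add_atTop_nat 1)).dist
      ((mid_tendsto₁ H x' y').comp (tendsto_add_atTop_nat 1))
  have := le_of_tendsto' hL key
  linarith

end Mid
section Equi

open Topology
set_option linter.unusedSectionVars false

variable [CompleteSpace X] [Nonempty X]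
variable {G : Type*} [Group G] [MulAction G X]

lemma pIter_equi (hequiv : ∀ (g : G) (x y : X), ∀ t ∈ Set.Icc (0:ℝ) 1,
      g • σ x y t = σ (g • x) (g • y) t) (g : G) (p : X × X) (t : ℕ) :
    (pIter σ)^[t] (g • p.1, g • p.2) = (g • ((pIter σ)^[t] p).1, g • ((pIter σ)^[t] p).2) := by
  induction t with
  | zero => rfl
  | succ t ih =>
    rw [Function.iterate_succ_apply', Function.iterate_succ_apply', ih]
    show (σ (g • _) (g • _) 2⁻¹, σ (g • _) (g • _) 2⁻¹) = _
    rw [← hequiv g _ _ 2⁻¹ half_mem, ← hequiv g _ _ 2⁻¹ half_mem]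
    rfl

lemma mid_equi (H : Nice σ) (hiso : ∀ g : G, Isometry (fun x : X => g • x))
    (hequiv : ∀ (g : G) (x y : X), ∀ t ∈ Set.Icc (0:ℝ) 1,
      g • σ x y t = σ (g • x) (g • y) t) (g : G) (x y : X) :
    g • mid σ x y = mid σ (g • x) (g • y) := by
  have h1 : Tendsto (fun t => g • ((pIter σ)^[t] (x, y)).1) atTop (𝓝 (g • mid σ x y)) :=
    ((hiso g).continuous.tendsto _).comp (mid_tendsto₁ H x y)
  have h2 : (fun t => g • ((pIter σ)^[t] (x, y)).1)
      = fun t => ((pIter σ)^[t] (g • x, g • y)).1 := by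
    funext t
    rw [show ((g:G) • x, g • y) = (g • (x,y).1, g • (x,y).2) from rfl, pIter_equi hequiv]
  rw [h2] at h1
  exact tendsto_nhds_unique h1 (mid_tendsto₁ H (g • x) (g • y))

end Equi
section Bar

open Topology
set_option linter.unusedSectionVars false
set_option maxHeartbeats 1000000

variable {G : Type*} [Group G] [MulAction G X]

/-- A symmetric, equivariant, `1/n`-Lipschitz (per coordinate) barycenter of `n` points. -/
structure BarPack (σ : X → X → ℝ → X) (G : Type*) [Group G] [MulAction G X] (n : ℕ) where
  b : (Fin n → X) → X
  lip : ∀ u v : Fin n → X, (n : ℝ) * dist (b u) (b v) ≤ ∑ i, dist (u i) (v i)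
  symm : ∀ (u : Fin n → X) (π : Equiv.Perm (Fin n)), b (u ∘ π) = b u
  diag : ∀ z : X, b (fun _ => z) = z
  equi : ∀ (g : G) (u : Fin n → X), g • b u = b (fun i => g • u i)

def base1 : BarPack σ G 1 where
  b u := u 0
  lip u v := by
    rw [Fin.sum_univ_one]
    norm_num
  symm u π := by
    have h : π 0 = 0 := Subsingleton.elim _ _
    show u (π 0) = u 0
    rw [h]
  diag z := rfl
  equi g u := rfl

variable [CompleteSpace X] [Nonempty X]

noncomputable def base2 (H : Nice σ) (hiso : ∀ g : G, Isometry (fun x : X => g • x))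
    (hequiv : ∀ (g : G) (x y : X), ∀ t ∈ Set.Icc (0:ℝ) 1,
      g • σ x y t = σ (g • x) (g • y) t) : BarPack σ G 2 where
  b u := mid σ (u 0) (u 1)
  lip u v := by
    have := mid_lip H (u 0) (u 1) (v 0) (v 1)
    rw [Fin.sum_univ_two]
    push_cast
    linarith
  symm u π := by
    have hall : ∀ i : Fin 2, i = 0 ∨ i = 1 := by decide
    show mid σ (u (π 0)) (u (π 1)) = mid σ (u 0) (u 1)
    have hne : π 0 ≠ π 1 := fun h => by
      have := π.injective h
      exact absurd this (by decide)
    rcases hall (π 0) with h0 | h0 <;> rcases hall (π 1) with h1 | h1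
    · exact absurd (h0.trans h1.symm) hne
    · rw [h0, h1]
    · rw [h0, h1]; exact mid_comm H (u 1) (u 0)
    · exact absurd (h0.trans h1.symm) hne
  diag z := mid_self H z
  equi g u := mid_equi H hiso hequiv g (u 0) (u 1)

variable {n : ℕ}

/-- One step of the Es-Sahib–Heinich iteration. -/
def stepMap (B : BarPack σ G n) : (Fin (n+1) → X) → (Fin (n+1) → X) :=
  fun u i => B.b (u ∘ i.succAbove)

def pairSum {m : ℕ} (u : Fin m → X) : ℝ := ∑ i, ∑ j, dist (u i) (u j)

lemma pairSum_nonneg {m : ℕ} (u : Fin m → X) : 0 ≤ pairSum u :=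
  Finset.sum_nonneg fun _ _ => Finset.sum_nonneg fun _ _ => dist_nonneg

lemma dist_le_pairSum {m : ℕ} (u : Fin m → X) (i j : Fin m) :
    dist (u i) (u j) ≤ pairSum u := by
  have h1 : dist (u i) (u j) ≤ ∑ j', dist (u i) (u j') :=
    Finset.single_le_sum (fun _ _ => dist_nonneg) (Finset.mem_univ j)
  have h2 : (∑ j', dist (u i) (u j')) ≤ pairSum u :=
    Finset.single_le_sum (f := fun i' => ∑ j', dist (u i') (u j'))
      (fun _ _ => Finset.sum_nonneg fun _ _ => dist_nonneg) (Finset.mem_univ i)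
  linarith

/-- The value of `B.b` on `u ∘ f` only depends on the range of the injection `f`. -/
lemma bar_comp_eq (B : BarPack σ G n) (u : Fin (n+1) → X) {f g : Fin n → Fin (n+1)}
    (hf : Function.Injective f) (hg : Function.Injective g)
    (hr : Set.range f = Set.range g) : B.b (u ∘ f) = B.b (u ∘ g) := by
  let ef := Equiv.ofInjective f hf
  let eg := Equiv.ofInjective g hg
  let π : Equiv.Perm (Fin n) := eg.trans ((Equiv.setCongr hr.symm).trans ef.symm)
  have hfg : ∀ k, f (π k) = g k := by
    intro k
    show f (ef.symm (Equiv.setCongr hr.symm (eg k))) = g k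
    rw [Equiv.apply_ofInjective_symm hf]
    rfl
  have hcomp : u ∘ g = (u ∘ f) ∘ π := by
    funext k
    show u (g k) = u (f (π k))
    rw [hfg]
  rw [hcomp, B.symm]

lemma stepMap_pair (B : BarPack σ G n) (u : Fin (n+1) → X) (i j : Fin (n+1)) :
    (n : ℝ) * dist (stepMap B u i) (stepMap B u j) ≤ dist (u i) (u j) := by
  rcases eq_or_ne i j with rfl | hij
  · simp
  · set h : Fin n → Fin (n+1) := fun k => Equiv.swap i j (j.succAbove k) with hh
    have hinj : Function.Injective h :=
      (Equiv.injective _).comp (Fin.succAbove_right_injective)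
    have hrange : Set.range h = {i}ᶜ := by
      show Set.range (⇑(Equiv.swap i j) ∘ j.succAbove) = _
      rw [Set.range_comp, Fin.range_succAbove, Set.image_compl_eq (Equiv.bijective _),
        Set.image_singleton, Equiv.swap_apply_right]
    have e1 : stepMap B u i = B.b (u ∘ h) := by
      apply bar_comp_eq B u (Fin.succAbove_right_injective) hinj
      rw [Fin.range_succAbove, hrange]
    have hlip := B.lip (u ∘ h) (u ∘ j.succAbove)
    obtain ⟨k₀, hk₀⟩ := Fin.exists_succAbove_eq hij
    have hsum : (∑ k, dist ((u ∘ h) k) ((u ∘ j.succAbove) k)) = dist (u j) (u i) := by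
      rw [Finset.sum_eq_single_of_mem k₀ (Finset.mem_univ k₀)]
      · show dist (u (Equiv.swap i j (j.succAbove k₀))) (u (j.succAbove k₀)) = _
        rw [hk₀, Equiv.swap_apply_left]
      · intro k _ hk
        show dist (u (Equiv.swap i j (j.succAbove k))) (u (j.succAbove k)) = 0
        have hne1 : j.succAbove k ≠ i := fun hcontr => hk (Fin.succAbove_right_injective (hcontr.trans hk₀.symm))
        have hne2 : j.succAbove k ≠ j := Fin.succAbove_ne j k
        rw [Equiv.swap_apply_of_ne_of_ne hne1 hne2, dist_self]
    have e2 : stepMap B u j = B.b (u ∘ j.succAbove) := rfl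
    rw [e1, e2, dist_comm (u i) (u j), ← hsum]
    exact hlip

lemma stepMap_coordLip (B : BarPack σ G n) (u v : Fin (n+1) → X) (i : Fin (n+1)) :
    (n : ℝ) * dist (stepMap B u i) (stepMap B v i)
      ≤ ∑ k, dist (u (i.succAbove k)) (v (i.succAbove k)) := by
  simpa [stepMap, Function.comp] using B.lip (u ∘ i.succAbove) (v ∘ i.succAbove)

lemma stepMap_perm (B : BarPack σ G n) (u : Fin (n+1) → X) (π : Equiv.Perm (Fin (n+1))) :
    stepMap B (u ∘ π) = stepMap B u ∘ π := by
  funext i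
  show B.b ((u ∘ π) ∘ i.succAbove) = B.b (u ∘ (π i).succAbove)
  have : (u ∘ π) ∘ i.succAbove = u ∘ (⇑π ∘ i.succAbove) := rfl
  rw [this]
  apply bar_comp_eq B u ((Equiv.injective π).comp Fin.succAbove_right_injective)
    Fin.succAbove_right_injective
  show Set.range (⇑π ∘ i.succAbove) = _
  rw [Set.range_comp, Fin.range_succAbove, Set.image_compl_eq (Equiv.bijective _),
    Set.image_singleton, Fin.range_succAbove]

lemma stepMap_diag (B : BarPack σ G n) (z : X) :
    stepMap B (fun _ => z) = fun _ => z := by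
  funext i
  exact B.diag z

lemma stepMap_equi (B : BarPack σ G n) (g : G) (u : Fin (n+1) → X) :
    stepMap B (fun i => g • u i) = fun i => g • stepMap B u i := by
  funext i
  exact (B.equi g (u ∘ i.succAbove)).symm

lemma iter_pair (B : BarPack σ G n) (hn : 2 ≤ n) (u : Fin (n+1) → X) (t : ℕ)
    (i j : Fin (n+1)) :
    dist ((stepMap B)^[t] u i) ((stepMap B)^[t] u j) ≤ ((n:ℝ)⁻¹)^t * pairSum u := by
  have hn0 : (0:ℝ) < (n:ℝ) := by
    have : 0 < n := lt_of_lt_of_le Nat.zero_lt_two hn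
    exact_mod_cast this
  induction t with
  | zero =>
    rw [pow_zero, one_mul]
    exact dist_le_pairSum u i j
  | succ t ih =>
    rw [Function.iterate_succ_apply']
    have hp := stepMap_pair B ((stepMap B)^[t] u) i j
    have h2 : dist (stepMap B ((stepMap B)^[t] u) i) (stepMap B ((stepMap B)^[t] u) j)
        ≤ (n:ℝ)⁻¹ * (((n:ℝ)⁻¹)^t * pairSum u) := by
      rw [show dist (stepMap B ((stepMap B)^[t] u) i) (stepMap B ((stepMap B)^[t] u) j)
          = (n:ℝ)⁻¹ * ((n:ℝ) * dist (stepMap B ((stepMap B)^[t] u) i)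
            (stepMap B ((stepMap B)^[t] u) j)) by
        rw [inv_mul_cancel_left₀ (ne_of_gt hn0)]]
      exact mul_le_mul_of_nonneg_left (le_trans hp ih) (inv_nonneg.mpr (le_of_lt hn0))
    calc dist _ _ ≤ (n:ℝ)⁻¹ * (((n:ℝ)⁻¹)^t * pairSum u) := h2
      _ = ((n:ℝ)⁻¹)^(t+1) * pairSum u := by ring

lemma iter_move (B : BarPack σ G n) (hn : 2 ≤ n) (u : Fin (n+1) → X) (t : ℕ)
    (i : Fin (n+1)) :
    dist ((stepMap B)^[t] u i) ((stepMap B)^[t+1] u i) ≤ ((n:ℝ)⁻¹)^t * pairSum u := by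
  have hn0 : (0:ℝ) < (n:ℝ) := by
    have : 0 < n := lt_of_lt_of_le Nat.zero_lt_two hn
    exact_mod_cast this
  rw [Function.iterate_succ_apply']
  have hb : (n:ℝ) * dist (stepMap B ((stepMap B)^[t] u) i) ((stepMap B)^[t] u i)
      ≤ ∑ k, dist ((stepMap B)^[t] u (i.succAbove k)) ((stepMap B)^[t] u i) := by
    have hlip := B.lip (((stepMap B)^[t] u) ∘ i.succAbove) (fun _ => (stepMap B)^[t] u i)
    rw [B.diag] at hlip
    simpa [stepMap, Function.comp] using hlip
  have hterm : ∀ k : Fin n, dist ((stepMap B)^[t] u (i.succAbove k)) ((stepMap B)^[t] u i)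
      ≤ ((n:ℝ)⁻¹)^t * pairSum u := fun k => iter_pair B hn u t _ _
  have hsum : (∑ k : Fin n, dist ((stepMap B)^[t] u (i.succAbove k)) ((stepMap B)^[t] u i))
      ≤ (n:ℝ) * (((n:ℝ)⁻¹)^t * pairSum u) := by
    calc (∑ k : Fin n, dist ((stepMap B)^[t] u (i.succAbove k)) ((stepMap B)^[t] u i))
        ≤ ∑ _k : Fin n, ((n:ℝ)⁻¹)^t * pairSum u := Finset.sum_le_sum fun k _ => hterm k
      _ = (n:ℝ) * (((n:ℝ)⁻¹)^t * pairSum u) := by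
          rw [Finset.sum_const, Finset.card_univ, Fintype.card_fin, nsmul_eq_mul]
  have := le_trans hb hsum
  have hfin : dist (stepMap B ((stepMap B)^[t] u) i) ((stepMap B)^[t] u i)
      ≤ ((n:ℝ)⁻¹)^t * pairSum u :=
    le_of_mul_le_mul_left this hn0
  rw [dist_comm]
  exact hfin

lemma iter_cauchy (B : BarPack σ G n) (hn : 2 ≤ n) (u : Fin (n+1) → X) (i : Fin (n+1)) :
    CauchySeq (fun t => (stepMap B)^[t] u i) := by
  have hlt : ((n:ℝ))⁻¹ < 1 := by
    have h1 : (1:ℝ) < (n:ℝ) := by exact_mod_cast lt_of_lt_of_le Nat.one_lt_two hn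
    rw [inv_lt_one_iff₀]
    right; exact h1
  exact cauchySeq_of_le_geometric ((n:ℝ)⁻¹) (pairSum u) hlt
    (fun t => by rw [mul_comm]; exact iter_move B hn u t i)

noncomputable def stepLim (B : BarPack σ G n) (u : Fin (n+1) → X) : X :=
  limUnder atTop (fun t => (stepMap B)^[t] u 0)

lemma stepLim_spec (B : BarPack σ G n) (hn : 2 ≤ n) (u : Fin (n+1) → X) (i : Fin (n+1)) :
    Tendsto (fun t => (stepMap B)^[t] u i) atTop (𝓝 (stepLim B u)) := by
  have hinv0 : (0:ℝ) ≤ (n:ℝ)⁻¹ := inv_nonneg.mpr (by positivity)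
  have hlt : ((n:ℝ))⁻¹ < 1 := by
    have h1 : (1:ℝ) < (n:ℝ) := by exact_mod_cast lt_of_lt_of_le Nat.one_lt_two hn
    rw [inv_lt_one_iff₀]; right; exact h1
  have h0 : Tendsto (fun t => (stepMap B)^[t] u 0) atTop (𝓝 (stepLim B u)) :=
    (iter_cauchy B hn u 0).tendsto_limUnder
  rw [tendsto_iff_dist_tendsto_zero] at h0 ⊢
  apply squeeze_zero (fun t => dist_nonneg)
    (g := fun t => ((n:ℝ)⁻¹)^t * pairSum u + dist ((stepMap B)^[t] u 0) (stepLim B u))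
  · intro t
    calc dist ((stepMap B)^[t] u i) (stepLim B u)
        ≤ dist ((stepMap B)^[t] u i) ((stepMap B)^[t] u 0)
          + dist ((stepMap B)^[t] u 0) (stepLim B u) := dist_triangle _ _ _
      _ ≤ ((n:ℝ)⁻¹)^t * pairSum u + dist ((stepMap B)^[t] u 0) (stepLim B u) :=
          add_le_add (iter_pair B hn u t i 0) (le_refl _)
  · have hgeo : Tendsto (fun t : ℕ => ((n:ℝ)⁻¹)^t * pairSum u) atTop (𝓝 0) := by
      have := (tendsto_pow_atTop_nhds_zero_of_lt_one hinv0 hlt).mul_const (pairSum u)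
      simpa using this
    simpa using hgeo.add h0

noncomputable def step (hiso : ∀ g : G, Isometry (fun x : X => g • x))
    (hn : 2 ≤ n) (B : BarPack σ G n) : BarPack σ G (n+1) where
  b := stepLim B
  lip u v := by
    have hn0 : (0:ℝ) < (n:ℝ) := by
      have : 0 < n := lt_of_lt_of_le Nat.zero_lt_two hn
      exact_mod_cast this
    have key : ∀ (t : ℕ) (i : Fin (n+1)),
        (n:ℝ) * dist ((stepMap B)^[t+1] u i) ((stepMap B)^[t+1] v i)
        ≤ ∑ k, dist ((stepMap B)^[t] u (i.succAbove k)) ((stepMap B)^[t] v (i.succAbove k)) := by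
      intro t i
      rw [Function.iterate_succ_apply', Function.iterate_succ_apply']
      exact stepMap_coordLip B _ _ i
    have hT : ∀ t : ℕ, (∑ i, dist ((stepMap B)^[t+1] u i) ((stepMap B)^[t+1] v i))
        ≤ ∑ i, dist ((stepMap B)^[t] u i) ((stepMap B)^[t] v i) := by
      intro t
      have hsum : ∀ i : Fin (n+1),
          (∑ k, dist ((stepMap B)^[t] u (i.succAbove k)) ((stepMap B)^[t] v (i.succAbove k)))
          = (∑ j, dist ((stepMap B)^[t] u j) ((stepMap B)^[t] v j))
            - dist ((stepMap B)^[t] u i) ((stepMap B)^[t] v i) := by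
        intro i
        have h := Fin.sum_univ_succAbove
          (fun j => dist ((stepMap B)^[t] u j) ((stepMap B)^[t] v j)) i
        linarith
      have h1 : (n:ℝ) * (∑ i, dist ((stepMap B)^[t+1] u i) ((stepMap B)^[t+1] v i))
          ≤ ∑ i : Fin (n+1), ((∑ j, dist ((stepMap B)^[t] u j) ((stepMap B)^[t] v j))
            - dist ((stepMap B)^[t] u i) ((stepMap B)^[t] v i)) := by
        rw [Finset.mul_sum]
        apply Finset.sum_le_sum
        intro i _
        rw [← hsum i]
        exact key t i
      have h2 : (∑ i : Fin (n+1), ((∑ j, dist ((stepMap B)^[t] u j) ((stepMap B)^[t] v j))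
            - dist ((stepMap B)^[t] u i) ((stepMap B)^[t] v i)))
          = (n:ℝ) * (∑ j, dist ((stepMap B)^[t] u j) ((stepMap B)^[t] v j)) := by
        rw [Finset.sum_sub_distrib, Finset.sum_const, Finset.card_univ, Fintype.card_fin,
          nsmul_eq_mul]
        push_cast
        ring
      have h3 := le_trans h1 (le_of_eq h2)
      exact le_of_mul_le_mul_left h3 hn0
    have hTle : ∀ t : ℕ, (∑ i, dist ((stepMap B)^[t] u i) ((stepMap B)^[t] v i))
        ≤ ∑ i, dist (u i) (v i) := by
      intro t
      induction t with
      | zero => simp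
      | succ t ih => exact le_trans (hT t) ih
    have hlim : Tendsto (fun t => ∑ i, dist ((stepMap B)^[t] u i) ((stepMap B)^[t] v i)) atTop
        (𝓝 (∑ _i : Fin (n+1), dist (stepLim B u) (stepLim B v))) := by
      apply tendsto_finset_sum
      intro i _
      exact (stepLim_spec B hn u i).dist (stepLim_spec B hn v i)
    have hfin := le_of_tendsto hlim (Filter.Eventually.of_forall hTle)
    rw [Finset.sum_const, Finset.card_univ, Fintype.card_fin, nsmul_eq_mul] at hfin
    push_cast at hfin ⊢
    linarith
  symm u π := by
    have hiter : ∀ t, (stepMap B)^[t] (u ∘ π) = ((stepMap B)^[t] u) ∘ π := by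
      intro t
      induction t with
      | zero => rfl
      | succ t ih =>
        rw [Function.iterate_succ_apply', Function.iterate_succ_apply', ih, stepMap_perm]
    have h1 : Tendsto (fun t => (stepMap B)^[t] (u ∘ π) 0) atTop (𝓝 (stepLim B (u ∘ π))) :=
      stepLim_spec B hn (u ∘ π) 0
    have h2 : (fun t => (stepMap B)^[t] (u ∘ π) 0) = fun t => ((stepMap B)^[t] u) (π 0) := by
      funext t; rw [hiter t]; rfl
    rw [h2] at h1
    exact tendsto_nhds_unique h1 (stepLim_spec B hn u (π 0))
  diag z := by
    have hiter : ∀ t, (stepMap B)^[t] (fun _ => z) = (fun _ => z : Fin (n+1) → X) := by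
      intro t
      induction t with
      | zero => rfl
      | succ t ih => rw [Function.iterate_succ_apply', ih, stepMap_diag]
    have h1 : Tendsto (fun t => (stepMap B)^[t] (fun _ => z) 0) atTop
        (𝓝 (stepLim B (fun _ => z))) := stepLim_spec B hn _ 0
    have h2 : (fun t => (stepMap B)^[t] (fun _ => z) 0) = fun _ => z := by
      funext t; rw [hiter t]
    rw [h2] at h1
    exact tendsto_nhds_unique h1 tendsto_const_nhds
  equi g u := by
    have hiter : ∀ t, (stepMap B)^[t] (fun i => g • u i)
        = fun i => g • ((stepMap B)^[t] u i) := by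
      intro t
      induction t with
      | zero => rfl
      | succ t ih =>
        rw [Function.iterate_succ_apply', ih, stepMap_equi]
        funext i
        rw [Function.iterate_succ_apply']
    have h1 : Tendsto (fun t => g • ((stepMap B)^[t] u 0)) atTop (𝓝 (g • stepLim B u)) :=
      ((hiso g).continuous.tendsto _).comp (stepLim_spec B hn u 0)
    have h2 : (fun t => g • ((stepMap B)^[t] u 0))
        = fun t => (stepMap B)^[t] (fun i => g • u i) 0 := by
      funext t; rw [hiter t]
    rw [h2] at h1
    exact tendsto_nhds_unique h1 (stepLim_spec B hn _ 0)

end Bar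
section Tower

variable {G : Type*} [Group G] [MulAction G X] [CompleteSpace X] [Nonempty X]

noncomputable def tower (H : Nice σ) (hiso : ∀ g : G, Isometry (fun x : X => g • x))
    (hequiv : ∀ (g : G) (x y : X), ∀ t ∈ Set.Icc (0:ℝ) 1,
      g • σ x y t = σ (g • x) (g • y) t) : ∀ k : ℕ, BarPack σ G (k+1)
  | 0 => base1
  | 1 => base2 H hiso hequiv
  | (k+2) => step hiso (by omega) (tower H hiso hequiv (k+1))

end Tower

end FGFP

/-- **Finite groups acting on spaces with conical equivariant bicombings have fixed
points** (Proposition `fingpfixpt`). -/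
theorem finite_group_fixed_point
    {G : Type*} [Group G] [Finite G] [MulAction G X]
    [CompleteSpace X] [Nonempty X]
    (hiso : ∀ g : G, Isometry (fun x : X => g • x))
    (σ : X → X → ℝ → X) (hσ : IsGeodesicBicombing σ) (hconical : IsConical σ)
    (hequiv : ∀ (g : G) (x y : X), ∀ t ∈ Set.Icc (0 : ℝ) 1,
      g • σ x y t = σ (g • x) (g • y) t) :
    ∃ x : X, ∀ g : G, g • x = x := by
  obtain ⟨hcont, h0, h1, hg⟩ := hσ
  have H : FGFP.Nice σ := ⟨h0, h1, hg, hconical⟩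
  obtain ⟨x₀⟩ := ‹Nonempty X›
  obtain ⟨N, ⟨e⟩⟩ := Finite.exists_equiv_fin G
  rcases N with _ | n
  · exact (e (1 : G)).elim0
  · set B := FGFP.tower H hiso hequiv n with hB
    set u : Fin (n+1) → X := fun i => (e.symm i) • x₀ with hu
    refine ⟨B.b u, fun h => ?_⟩
    rw [B.equi h u]
    have hcomp : (fun i => h • u i) = u ∘ ⇑(e.symm.trans ((Equiv.mulLeft h).trans e)) := by
      funext i
      show h • ((e.symm i) • x₀) = (e.symm (e (h * e.symm i))) • x₀
      rw [Equiv.symm_apply_apply, mul_smul]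
    rw [hcomp, B.symm]
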